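/- If two quasi-polynomial functions on a lattice L ≅ ℤ^n agree on the set of lattice points in s + τ for some point s and some open (full-dimensional) polyhedral cone τ, then they are equal on all of L. -/
import Mathlib


/-- A quasi-polynomial (periodic polynomial) function on the lattice `ℤ^n`: there is a
period `q > 0` such that on each coset of `q·ℤ^n` the function is given by a polynomial. -/
def IsQuasiPolynomial {n : ℕ} (p : (Fin n → ℤ) → ℚ) : Prop :=
  ∃ q : ℤ, 0 < q ∧ ∀ r : Fin n → ℤ, ∃ P : MvPolynomial (Fin n) ℚ,
    ∀ x : Fin n → ℤ, (∀ i, x i % q = r i % q) →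
      p x = MvPolynomial.eval (fun i => (x i : ℚ)) P

private lemma eval_aeval_poly {n : ℕ} (g : Fin n → Polynomial ℚ)
    (P : MvPolynomial (Fin n) ℚ) (t : ℚ) :
    (MvPolynomial.aeval g P).eval t = MvPolynomial.eval (fun i => (g i).eval t) P := by
  induction P using MvPolynomial.induction_on with
  | C a => simp
  | add p q hp hq => simp [hp, hq]
  | mul_X p i hp => simp [hp]

/-- If two quasi-polynomial functions on `ℤ^n` agree on all lattice points of a translate
`s + τ` of a nonempty open polyhedral cone `τ` (cut out by finitely many strict rational
linear inequalities), then they agree everywhere. -/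
theorem quasiPolynomial_eq_of_eq_on_translated_cone
    {n : ℕ} (p₁ p₂ : (Fin n → ℤ) → ℚ)
    (h₁ : IsQuasiPolynomial p₁) (h₂ : IsQuasiPolynomial p₂)
    {ι : Type*} (A : Finset ι) (c : ι → Fin n → ℚ)
    (τ : Set (Fin n → ℚ))
    (hτ : τ = {y | ∀ a ∈ A, 0 < ∑ i, c a i * y i})
    (hne : τ.Nonempty)
    (s : Fin n → ℚ)
    (hagree : ∀ x : Fin n → ℤ, (fun i => (x i : ℚ) - s i) ∈ τ → p₁ x = p₂ x) :
    p₁ = p₂ := by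
  -- a rational point of the cone
  obtain ⟨y₀, hy₀⟩ := hne
  rw [hτ] at hy₀
  -- an integer direction inside the cone: clear denominators of y₀
  set N : ℕ := ∏ i, (y₀ i).den with hN
  have hNpos : 0 < N := Finset.prod_pos (fun i _ => (y₀ i).pos)
  set d : Fin n → ℤ := fun i => (y₀ i).num * (N / (y₀ i).den : ℕ) with hd
  have hdcast : ∀ i, (d i : ℚ) = (N : ℚ) * y₀ i := by
    intro i
    have hdvd : (y₀ i).den ∣ N := Finset.dvd_prod_of_mem _ (Finset.mem_univ i)
    have hden : ((y₀ i).den : ℚ) ≠ 0 := by exact_mod_cast (y₀ i).den_nz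
    have hdvd' : ((y₀ i).den : ℤ) ∣ (N : ℤ) := Int.natCast_dvd_natCast.mpr hdvd
    rw [hd]
    push_cast [Int.cast_div_charZero hdvd']
    conv_rhs => rw [← Rat.num_div_den (y₀ i)]
    ring
  have hdpos : ∀ a ∈ A, 0 < ∑ i, c a i * (d i : ℚ) := by
    intro a ha
    have : ∑ i, c a i * (d i : ℚ) = (N : ℚ) * ∑ i, c a i * y₀ i := by
      rw [Finset.mul_sum]
      refine Finset.sum_congr rfl fun i _ => ?_
      rw [hdcast i]; ring
    rw [this]
    have : (0 : ℚ) < N := by exact_mod_cast hNpos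
    exact mul_pos this (hy₀ a ha)
  -- common period and polynomials
  obtain ⟨q₁, hq₁, H₁⟩ := h₁
  obtain ⟨q₂, hq₂, H₂⟩ := h₂
  set q : ℤ := q₁ * q₂ with hqdef
  have hqpos : 0 < q := mul_pos hq₁ hq₂
  funext x₀
  obtain ⟨P₁, hP₁⟩ := H₁ x₀
  obtain ⟨P₂, hP₂⟩ := H₂ x₀
  -- constants of the line t ↦ x₀ + q t d
  set K : ι → ℚ := fun a => ∑ i, c a i * ((x₀ i : ℚ) - s i) with hK
  set M : ι → ℚ := fun a => ∑ i, c a i * (d i : ℚ) with hM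
  -- a threshold beyond which the line is in the translated cone
  obtain ⟨T, hT⟩ := Finset.exists_le (A.image fun a => -K a / ((q : ℚ) * M a))
  set B : ℤ := ⌈T⌉ + 1 with hB
  -- the one-variable polynomial
  set g : Fin n → Polynomial ℚ := fun i =>
    Polynomial.C ((x₀ i : ℚ)) + Polynomial.C ((q : ℚ) * (d i : ℚ)) * Polynomial.X with hg
  set F : Polynomial ℚ := MvPolynomial.aeval g (P₁ - P₂) with hF
  have hgeval : ∀ (i) (t : ℚ), (g i).eval t = (x₀ i : ℚ) + (q : ℚ) * (d i : ℚ) * t := by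
    intro i t; simp [hg]
  -- every large integer is a root of F
  have hroot : ∀ t : ℤ, B ≤ t → F.IsRoot (t : ℚ) := by
    intro t ht
    set x : Fin n → ℤ := fun i => x₀ i + q * t * d i with hx
    have hxcast : ∀ i, ((x i : ℚ)) = (x₀ i : ℚ) + (q : ℚ) * (d i : ℚ) * (t : ℚ) := by
      intro i; rw [hx]; push_cast; ring
    -- x is in the translated cone
    have hmem : (fun i => (x i : ℚ) - s i) ∈ τ := by
      rw [hτ]
      intro a ha
      have hsum : ∑ i, c a i * ((x i : ℚ) - s i) = K a + (q : ℚ) * (t : ℚ) * M a := by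
        rw [hK, hM, Finset.mul_sum, ← Finset.sum_add_distrib]
        refine Finset.sum_congr rfl fun i _ => ?_
        rw [hxcast i]; ring
      rw [hsum]
      have hMpos : 0 < (q : ℚ) * M a := by
        have : (0 : ℚ) < q := by exact_mod_cast hqpos
        exact mul_pos this (hdpos a ha)
      have h1 : -K a / ((q : ℚ) * M a) ≤ T :=
        hT _ (Finset.mem_image_of_mem _ ha)
      have h2 : T < (t : ℚ) := by
        have : ((⌈T⌉ : ℤ) : ℚ) < (t : ℚ) := by
          exact_mod_cast lt_of_lt_of_le (by omega : ⌈T⌉ < B) ht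
        exact lt_of_le_of_lt (Int.le_ceil T) this
      have h3 : -K a / ((q : ℚ) * M a) < (t : ℚ) := lt_of_le_of_lt h1 h2
      have h4 : -K a < (t : ℚ) * ((q : ℚ) * M a) := (div_lt_iff₀ hMpos).mp h3
      nlinarith [h4]
    -- residues of x agree with x₀
    have hr₁ : ∀ i, x i % q₁ = x₀ i % q₁ := by
      intro i
      have : x i = x₀ i + q₁ * (q₂ * t * d i) := by rw [hx, hqdef]; ring
      rw [this, Int.add_mul_emod_self_left]
    have hr₂ : ∀ i, x i % q₂ = x₀ i % q₂ := by
      intro i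
      have : x i = x₀ i + q₂ * (q₁ * t * d i) := by rw [hx, hqdef]; ring
      rw [this, Int.add_mul_emod_self_left]
    have hval : MvPolynomial.eval (fun i => (x i : ℚ)) P₁
        = MvPolynomial.eval (fun i => (x i : ℚ)) P₂ := by
      rw [← hP₁ x hr₁, ← hP₂ x hr₂]
      exact hagree x hmem
    show F.eval (t : ℚ) = 0
    rw [hF, eval_aeval_poly]
    have : (fun i => (g i).eval (t : ℚ)) = fun i => ((x i : ℚ)) := by
      funext i; rw [hgeval, hxcast]
    rw [this]
    simp [hval]
  -- hence F = 0
  have hF0 : F = 0 := by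
    apply Polynomial.eq_zero_of_infinite_isRoot
    have hinj : Set.InjOn (fun t : ℤ => (t : ℚ)) (Set.Ici B) :=
      fun a _ b _ h => Int.cast_injective h
    have : ((fun t : ℤ => (t : ℚ)) '' Set.Ici B).Infinite :=
      (Set.Ici_infinite B).image hinj
    refine this.mono ?_
    rintro _ ⟨t, ht, rfl⟩
    exact hroot t ht
  -- evaluate at t = 0
  have h0 : MvPolynomial.eval (fun i => ((x₀ i : ℚ))) P₁
      = MvPolynomial.eval (fun i => ((x₀ i : ℚ))) P₂ := by
    have := congrArg (Polynomial.eval (0 : ℚ)) hF0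
    rw [hF, eval_aeval_poly] at this
    have hg0 : (fun i => (g i).eval (0 : ℚ)) = fun i => ((x₀ i : ℚ)) := by
      funext i; rw [hgeval]; ring
    rw [hg0] at this
    simpa [sub_eq_zero] using this
  rw [hP₁ x₀ (fun i => rfl), hP₂ x₀ (fun i => rfl), h0]
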